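/- Let K = F_p for a prime p, or K = ℤ. Let S_N ⊆ N(K) be a subset such that for every n ∈ ℕ the image of the subgroup generated by S_N under the canonical projection N(K) → N(K)/N^n(K) is the whole quotient group (i.e. S_N topologically generates the Nottingham group N(K)). Then for every m ≥ 2, the quotient group R(K)/R^m(K) is generated by the images of the elements (1+x, x) and (1, g) for g ∈ S_N; consequently the set {(1+x, x)} ∪ {(1,g) : g ∈ S_N} topologically generates the Riordan group R(K). -/

import Mathlib

open PowerSeries Finset

namespace RiordanPaper

variable {K : Type*} [CommRing K]

noncomputable def comp (f g : PowerSeries K) : PowerSeries K :=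
  PowerSeries.mk fun n => ∑ d ∈ Finset.range (n + 1), coeff d f * coeff n (g ^ d)

lemma coeff_comp (f g : PowerSeries K) (n : ℕ) :
    coeff n (comp f g) = ∑ d ∈ Finset.range (n + 1), coeff d f * coeff n (g ^ d) := by
  simp [comp]

lemma coeff_pow_eq_zero {g : PowerSeries K} (hg : constantCoeff g = 0) {n d : ℕ}
    (h : n < d) : coeff n (g ^ d) = 0 := by
  have hdvd : (X : PowerSeries K) ^ d ∣ g ^ d :=
    pow_dvd_pow_of_dvd (PowerSeries.X_dvd_iff.2 hg) d
  exact (PowerSeries.X_pow_dvd_iff.1 hdvd) n h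

lemma coeff_comp_of_lt {g : PowerSeries K} (hg : constantCoeff g = 0)
    (f : PowerSeries K) {n N : ℕ} (hn : n < N) :
    coeff n (comp f g) = ∑ d ∈ Finset.range N, coeff d f * coeff n (g ^ d) := by
  rw [coeff_comp]
  apply Finset.sum_subset
  · intro d hd
    simp only [Finset.mem_range] at hd ⊢
    omega
  · intro d _ hd'
    simp only [Finset.mem_range] at hd'
    rw [coeff_pow_eq_zero hg (by omega), mul_zero]

lemma coeff_eval₂ {g : PowerSeries K} (hg : constantCoeff g = 0)
    (P : Polynomial K) (n : ℕ) :
    coeff n (Polynomial.eval₂ C g P)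
      = ∑ d ∈ Finset.range (n + 1), P.coeff d * coeff n (g ^ d) := by
  classical
  have h1 : P.natDegree < max (n + 1) (P.natDegree + 1) :=
    lt_of_lt_of_le (Nat.lt_succ_self _) (le_max_right _ _)
  rw [Polynomial.eval₂_eq_sum_range' C h1 g, map_sum]
  have h2 : ∀ d ∈ Finset.range (max (n + 1) (P.natDegree + 1)),
      coeff n (C (P.coeff d) * g ^ d) = P.coeff d * coeff n (g ^ d) := fun d _ => by
    rw [coeff_C_mul]
  rw [Finset.sum_congr rfl h2]
  symm
  apply Finset.sum_subset
  · intro d hd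
    simp only [Finset.mem_range] at hd ⊢
    omega
  · intro d _ hd'
    simp only [Finset.mem_range] at hd'
    rw [coeff_pow_eq_zero hg (by omega), mul_zero]

lemma coeff_comp_eq_eval₂_trunc {g : PowerSeries K} (hg : constantCoeff g = 0)
    (f : PowerSeries K) {n N : ℕ} (hn : n < N) :
    coeff n (comp f g) = coeff n (Polynomial.eval₂ C g (trunc N f)) := by
  rw [coeff_eval₂ hg, coeff_comp]
  apply Finset.sum_congr rfl
  intro d hd
  simp only [Finset.mem_range] at hd
  rw [PowerSeries.coeff_trunc, if_pos (by omega)]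

lemma mul_comp {g : PowerSeries K} (hg : constantCoeff g = 0) (f₁ f₂ : PowerSeries K) :
    comp (f₁ * f₂) g = comp f₁ g * comp f₂ g := by
  ext n
  have key : coeff n (comp (f₁ * f₂) g)
      = coeff n (Polynomial.eval₂ C g (trunc (n + 1) f₁ * trunc (n + 1) f₂)) := by
    rw [coeff_eval₂ hg, coeff_comp]
    apply Finset.sum_congr rfl
    intro d hd
    simp only [Finset.mem_range] at hd
    congr 1
    rw [Polynomial.coeff_mul, PowerSeries.coeff_mul]
    apply Finset.sum_congr rfl
    intro ab hab
    simp at hab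
    rw [PowerSeries.coeff_trunc, PowerSeries.coeff_trunc, if_pos (by omega), if_pos (by omega)]
  rw [key, Polynomial.eval₂_mul, PowerSeries.coeff_mul, PowerSeries.coeff_mul]
  apply Finset.sum_congr rfl
  intro ab hab
  simp at hab
  rw [← coeff_comp_eq_eval₂_trunc hg f₁ (show ab.1 < n + 1 by omega),
    ← coeff_comp_eq_eval₂_trunc hg f₂ (show ab.2 < n + 1 by omega)]

lemma one_comp (g : PowerSeries K) : comp (1 : PowerSeries K) g = 1 := by
  ext n
  rw [coeff_comp, Finset.sum_eq_single 0]
  · simp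
  · intro d _ hd0
    simp [PowerSeries.coeff_one, hd0]
  · intro h
    simp at h

lemma comp_X (f : PowerSeries K) : comp f X = f := by
  ext n
  rw [coeff_comp, Finset.sum_eq_single n]
  · rw [coeff_X_pow, if_pos rfl, mul_one]
  · intro d _ hdn
    rw [coeff_X_pow, if_neg (fun h => hdn h.symm), mul_zero]
  · intro h
    simp at h

lemma X_comp {g : PowerSeries K} (hg : constantCoeff g = 0) : comp X g = g := by
  ext n
  rcases Nat.eq_zero_or_pos n with hn | hn
  · subst hn
    rw [coeff_comp]
    simp [PowerSeries.coeff_X, coeff_zero_eq_constantCoeff_apply, hg]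
  · rw [coeff_comp, Finset.sum_eq_single 1]
    · rw [coeff_one_X, pow_one, one_mul]
    · intro d _ hd1
      rw [PowerSeries.coeff_X, if_neg hd1, zero_mul]
    · intro h
      simp only [Finset.mem_range] at h
      omega

lemma constantCoeff_comp (f g : PowerSeries K) :
    constantCoeff (comp f g) = constantCoeff f := by
  rw [← coeff_zero_eq_constantCoeff_apply, coeff_comp]
  simp

lemma coeff_one_comp (f g : PowerSeries K) :
    coeff 1 (comp f g) = coeff 1 f * coeff 1 g := by
  rw [coeff_comp]
  have : Finset.range 2 = {0, 1} := rfl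
  rw [this, Finset.sum_insert (by simp), Finset.sum_singleton, pow_zero, pow_one]
  simp [PowerSeries.coeff_one]

lemma comp_assoc {g k : PowerSeries K} (hg : constantCoeff g = 0)
    (hk : constantCoeff k = 0) (f : PowerSeries K) :
    comp (comp f g) k = comp f (comp g k) := by
  have hpow : ∀ e : ℕ, (comp g k) ^ e = comp (g ^ e) k := by
    intro e
    induction e with
    | zero => simp [one_comp]
    | succ m ih => rw [pow_succ, pow_succ, ih, mul_comp hk]
  ext n
  rw [coeff_comp, coeff_comp]
  have L1 : ∀ d ∈ Finset.range (n + 1), coeff d (comp f g) * coeff n (k ^ d)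
      = ∑ e ∈ Finset.range (n + 1), coeff e f * coeff d (g ^ e) * coeff n (k ^ d) := by
    intro d hd
    simp only [Finset.mem_range] at hd
    rw [coeff_comp_of_lt hg f hd, Finset.sum_mul]
  rw [Finset.sum_congr rfl L1, Finset.sum_comm]
  apply Finset.sum_congr rfl
  intro e _
  rw [hpow e, coeff_comp, Finset.mul_sum]
  apply Finset.sum_congr rfl
  intro d _
  ring

/-- An element of the Riordan group: a pair `(h, g)` with
`h = 1 + a₁x + ⋯` and `g = x + b₂x² + ⋯`. -/
@[ext]
structure RiordanElem (K : Type*) [CommRing K] where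
  h : PowerSeries K
  g : PowerSeries K
  h_zero : constantCoeff h = 1
  g_zero : constantCoeff g = 0
  g_one : coeff 1 g = 1

namespace RiordanElem

noncomputable instance : Mul (RiordanElem K) :=
  ⟨fun a b => ⟨a.h * comp b.h a.g, comp b.g a.g,
    by rw [map_mul, a.h_zero, one_mul, constantCoeff_comp, b.h_zero],
    by rw [constantCoeff_comp, b.g_zero],
    by rw [coeff_one_comp, b.g_one, a.g_one, one_mul]⟩⟩

noncomputable instance : One (RiordanElem K) :=
  ⟨⟨1, X, map_one _, constantCoeff_X, coeff_one_X⟩⟩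

@[simp] lemma mul_h (a b : RiordanElem K) : (a * b).h = a.h * comp b.h a.g := rfl
@[simp] lemma mul_g (a b : RiordanElem K) : (a * b).g = comp b.g a.g := rfl
@[simp] lemma one_h : (1 : RiordanElem K).h = 1 := rfl
@[simp] lemma one_g : (1 : RiordanElem K).g = X := rfl

noncomputable instance instMonoid : Monoid (RiordanElem K) where
  mul_assoc a b c := by
    ext1
    · show (a.h * comp b.h a.g) * comp c.h (comp b.g a.g)
        = a.h * comp (b.h * comp c.h b.g) a.g
      rw [mul_comp a.g_zero, ← comp_assoc b.g_zero a.g_zero, mul_assoc]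
    · show comp c.g (comp b.g a.g) = comp (comp c.g b.g) a.g
      rw [comp_assoc b.g_zero a.g_zero]
  one_mul a := by
    ext1
    · show (1 : PowerSeries K) * comp a.h X = a.h
      rw [comp_X, one_mul]
    · show comp a.g X = a.g
      exact comp_X a.g
  mul_one a := by
    ext1
    · show a.h * comp 1 a.g = a.h
      rw [one_comp, mul_one]
    · show comp X a.g = a.g
      exact X_comp a.g_zero

end RiordanElem

/-- The Riordan group over `K`, realized as the units of the Riordan monoid. -/
noncomputable abbrev RiordanGroup (K : Type*) [CommRing K] := (RiordanElem K)ˣ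

/-- An element of the Nottingham group: `g = x + b₂x² + ⋯`. -/
@[ext]
structure NottinghamElem (K : Type*) [CommRing K] where
  g : PowerSeries K
  g_zero : constantCoeff g = 0
  g_one : coeff 1 g = 1

namespace NottinghamElem

noncomputable instance : Mul (NottinghamElem K) :=
  ⟨fun a b => ⟨comp b.g a.g,
    by rw [constantCoeff_comp, b.g_zero],
    by rw [coeff_one_comp, b.g_one, a.g_one, one_mul]⟩⟩

noncomputable instance : One (NottinghamElem K) :=
  ⟨⟨X, constantCoeff_X, coeff_one_X⟩⟩

@[simp] lemma mul_g (a b : NottinghamElem K) : (a * b).g = comp b.g a.g := rfl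
@[simp] lemma one_g : (1 : NottinghamElem K).g = X := rfl

noncomputable instance instMonoid : Monoid (NottinghamElem K) where
  mul_assoc a b c := by
    ext1
    show comp c.g (comp b.g a.g) = comp (comp c.g b.g) a.g
    rw [comp_assoc b.g_zero a.g_zero]
  one_mul a := by
    ext1
    show comp a.g X = a.g
    exact comp_X a.g
  mul_one a := by
    ext1
    show comp X a.g = a.g
    exact X_comp a.g_zero

end NottinghamElem

/-- The Nottingham group over `K`, realized as the units of the Nottingham monoid. -/
noncomputable abbrev NottinghamGroup (K : Type*) [CommRing K] := (NottinghamElem K)ˣ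

/-- `h` belongs to `H^n(K)`: the coefficients in degrees `1,…,n-1` vanish
(the constant-coefficient-one condition being imposed separately). -/
def IsHn (n : ℕ) (f : PowerSeries K) : Prop := ∀ i, 0 < i → i < n → coeff i f = 0

/-- `g` belongs to `N^n(K)`: the coefficients in degrees `2,…,n` vanish
(the conditions at degree `0`, `1` being imposed separately). -/
def IsNn (n : ℕ) (g : PowerSeries K) : Prop := ∀ j, 1 < j → j ≤ n → coeff j g = 0

/-- The subset `R^{m,n}(K) = H^m(K) ⋊ N^n(K)` of the Riordan group. -/
def Rmn (K : Type*) [CommRing K] (m n : ℕ) : Set (RiordanGroup K) :=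
  {u | IsHn m ((u : RiordanElem K).h) ∧ IsNn n ((u : RiordanElem K).g)}

/-- The subset `R^n(K) = H^n(K) ⋊ N^n(K)` of the Riordan group. -/
def Rn (K : Type*) [CommRing K] (n : ℕ) : Set (RiordanGroup K) := Rmn K n n


section Aux

variable {K : Type*} [CommRing K]

lemma coeff_mul_range (f g : PowerSeries K) (i : ℕ) :
    coeff i (f * g) = ∑ p ∈ Finset.range (i + 1), coeff p f * coeff (i - p) g := by
  rw [PowerSeries.coeff_mul, Finset.Nat.sum_antidiagonal_eq_sum_range_succ_mk]

lemma add_comp (f₁ f₂ g : PowerSeries K) : comp (f₁ + f₂) g = comp f₁ g + comp f₂ g := by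
  ext n
  simp [coeff_comp, add_mul, Finset.sum_add_distrib]

lemma coeff_comp_isNn {m : ℕ} {z g : PowerSeries K} (hz0 : constantCoeff z = 0)
    (hz1 : coeff 1 z = 1) (hz : IsNn m z) (hg : constantCoeff g = 0)
    {j : ℕ} (hj : j ≤ m) : coeff j (comp z g) = coeff j g := by
  rcases Nat.eq_zero_or_pos j with rfl | hjpos
  · simp only [coeff_zero_eq_constantCoeff_apply, constantCoeff_comp, hz0, hg]
  · rw [coeff_comp, Finset.sum_eq_single_of_mem 1 (Finset.mem_range.2 (by omega))]
    · rw [hz1, pow_one, one_mul]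
    · intro d hd hd1
      rcases Nat.eq_zero_or_pos d with rfl | hdpos
      · simp [hz0]
      · rw [hz d (by omega) (by have := Finset.mem_range.1 hd; omega), zero_mul]

lemma isHn_mul {n : ℕ} {f₁ f₂ : PowerSeries K} (h₁ : IsHn n f₁) (h₂ : IsHn n f₂) :
    IsHn n (f₁ * f₂) := by
  intro i hi0 hin
  rw [coeff_mul_range]
  apply Finset.sum_eq_zero
  intro p hp
  rcases Nat.eq_zero_or_pos p with rfl | hppos
  · simp [h₂ i hi0 hin]
  · rw [h₁ p hppos (by have := Finset.mem_range.1 hp; omega), zero_mul]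

lemma coeff_n_mul {n : ℕ} (hn : 0 < n) {f₁ : PowerSeries K} (h₁ : IsHn n f₁) (f₂ : PowerSeries K) :
    coeff n (f₁ * f₂)
      = constantCoeff f₁ * coeff n f₂ + coeff n f₁ * constantCoeff f₂ := by
  rw [coeff_mul_range]
  have hsub : ({0, n} : Finset ℕ) ⊆ Finset.range (n + 1) := by
    intro x hx
    simp only [Finset.mem_insert, Finset.mem_singleton] at hx
    rcases hx with rfl | rfl <;> simp [Finset.mem_range] <;> omega
  rw [← Finset.sum_subset hsub]
  · rw [Finset.sum_pair (by omega : (0 : ℕ) ≠ n)]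
    simp [coeff_zero_eq_constantCoeff_apply]
  · intro p hp hpn
    simp only [Finset.mem_insert, Finset.mem_singleton] at hpn
    push_neg at hpn
    rw [h₁ p (by omega) (by have := Finset.mem_range.1 hp; omega), zero_mul]

lemma isHn_of_mul_eq_one {n : ℕ} {f₁ f₂ : PowerSeries K} (hmul : f₁ * f₂ = 1)
    (h₁ : IsHn n f₁) (hc : constantCoeff f₁ = 1) : IsHn n f₂ := by
  intro i hi0 hin
  have h := congrArg (coeff i) hmul
  rw [coeff_mul_range, PowerSeries.coeff_one, if_neg (by omega)] at h
  rw [Finset.sum_eq_single_of_mem 0 (by simp)] at h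
  · simpa [coeff_zero_eq_constantCoeff_apply, hc] using h
  · intro p hp hp0
    rw [h₁ p (by omega) (by have := Finset.mem_range.1 hp; omega), zero_mul]

lemma coeff_n_of_mul_eq_one {n : ℕ} (hn : 0 < n) {f₁ f₂ : PowerSeries K} (hmul : f₁ * f₂ = 1)
    (h₁ : IsHn n f₁) (hc : constantCoeff f₁ = 1) (hc2 : constantCoeff f₂ = 1) :
    coeff n f₂ = - coeff n f₁ := by
  have h := congrArg (coeff n) hmul
  rw [coeff_n_mul hn h₁, hc, one_mul, hc2, mul_one, PowerSeries.coeff_one,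
    if_neg (by omega)] at h
  linear_combination h

lemma coeff_pow_self {g : PowerSeries K} (hg : constantCoeff g = 0) (n : ℕ) :
    coeff n (g ^ n) = (coeff 1 g) ^ n := by
  induction n with
  | zero => simp
  | succ k ih =>
    rw [pow_succ, coeff_mul_range,
      Finset.sum_eq_single_of_mem k (Finset.mem_range.2 (by omega))]
    · rw [ih, show k + 1 - k = 1 by omega, pow_succ]
    · intro p hp hpk
      rcases lt_or_gt_of_ne hpk with h | h
      · rw [coeff_pow_eq_zero hg h, zero_mul]
      · have hp1 : p = k + 1 := by have := Finset.mem_range.1 hp; omega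
        subst hp1
        simp [coeff_zero_eq_constantCoeff_apply, hg]

lemma coeff_one_mul' (f g : PowerSeries K) :
    coeff 1 (f * g) = constantCoeff f * coeff 1 g + coeff 1 f * constantCoeff g := by
  rw [coeff_mul_range, Finset.sum_range_succ, Finset.sum_range_one]
  simp [coeff_zero_eq_constantCoeff_apply]

end Aux
section Aux2

variable {K : Type*} [CommRing K]

/-- Coefficients of a compositional right inverse of `g`. -/
noncomputable def invCoeff (g : PowerSeries K) (n : ℕ) : K :=
  if n = 0 then 0
  else if n = 1 then 1
  else - ∑ d ∈ (Finset.range n).attach, invCoeff g d * coeff n (g ^ (d : ℕ))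
termination_by n
decreasing_by exact Finset.mem_range.1 d.2

lemma invCoeff_zero (g : PowerSeries K) : invCoeff g 0 = 0 := by
  rw [invCoeff]; simp

lemma invCoeff_one (g : PowerSeries K) : invCoeff g 1 = 1 := by
  rw [invCoeff]; simp

lemma invCoeff_of_two_le (g : PowerSeries K) {n : ℕ} (hn : 2 ≤ n) :
    invCoeff g n = - ∑ d ∈ Finset.range n, invCoeff g d * coeff n (g ^ d) := by
  rw [invCoeff, if_neg (by omega), if_neg (by omega), ← Finset.sum_attach (Finset.range n)
    (fun d => invCoeff g d * coeff n (g ^ d))]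

noncomputable def compInv (g : PowerSeries K) : PowerSeries K := PowerSeries.mk (invCoeff g)

lemma compInv_zero (g : PowerSeries K) : constantCoeff (compInv g) = 0 := by
  rw [← coeff_zero_eq_constantCoeff_apply, compInv, coeff_mk, invCoeff_zero]

lemma compInv_one (g : PowerSeries K) : coeff 1 (compInv g) = 1 := by
  rw [compInv, coeff_mk, invCoeff_one]

lemma comp_compInv {g : PowerSeries K} (hg0 : constantCoeff g = 0)
    (hg1 : coeff 1 g = 1) : comp (compInv g) g = X := by
  ext n
  rw [coeff_comp]
  simp only [compInv, coeff_mk]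
  match n with
  | 0 =>
    rw [Finset.sum_range_one, invCoeff_zero, zero_mul, PowerSeries.coeff_X,
      if_neg (by omega)]
  | 1 =>
    rw [Finset.sum_range_succ, Finset.sum_range_one, invCoeff_zero, zero_mul,
      invCoeff_one, one_mul, pow_one, hg1, zero_add, PowerSeries.coeff_X, if_pos rfl]
  | (n + 2) =>
    rw [Finset.sum_range_succ, coeff_pow_self hg0, hg1, one_pow, mul_one,
      invCoeff_of_two_le g (by omega), PowerSeries.coeff_X, if_neg (by omega)]
    ring

lemma nott_exists_right_inv (a : NottinghamElem K) : ∃ b : NottinghamElem K, a * b = 1 := by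
  refine ⟨⟨compInv a.g, compInv_zero a.g, compInv_one a.g⟩, ?_⟩
  ext1
  show comp (compInv a.g) a.g = (1 : NottinghamElem K).g
  rw [NottinghamElem.one_g, comp_compInv a.g_zero a.g_one]

/-- Every Nottingham element is invertible; realize it as a unit. -/
noncomputable def toUnit (a : NottinghamElem K) : NottinghamGroup K where
  val := a
  inv := Classical.choose (nott_exists_right_inv a)
  val_inv := Classical.choose_spec (nott_exists_right_inv a)
  inv_val := by
    set b := Classical.choose (nott_exists_right_inv a) with hbdef
    have hb : a * b = 1 := Classical.choose_spec (nott_exists_right_inv a)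
    obtain ⟨c, hc⟩ := nott_exists_right_inv b
    have hac : a = c := by
      calc a = a * (b * c) := by rw [hc, mul_one]
      _ = (a * b) * c := (mul_assoc a b c).symm
      _ = c := by rw [hb, one_mul]
    rw [hac]
    exact hc

@[simp] lemma toUnit_val (a : NottinghamElem K) :
    ((toUnit a : NottinghamGroup K) : NottinghamElem K) = a := rfl

/-- The subgroup `N^m(K)` of the Nottingham group. -/
def NnSubgroup (K : Type*) [CommRing K] (m : ℕ) : Subgroup (NottinghamGroup K) where
  carrier := {v | IsNn m ((v : NottinghamElem K).g)}
  one_mem' := by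
    intro j hj _
    show coeff j ((1 : NottinghamElem K).g) = 0
    rw [NottinghamElem.one_g, PowerSeries.coeff_X, if_neg (by omega)]
  mul_mem' := by
    intro a b ha hb j hj1 hjm
    show coeff j (((a * b : NottinghamGroup K) : NottinghamElem K).g) = 0
    rw [Units.val_mul, NottinghamElem.mul_g,
      coeff_comp_isNn (b : NottinghamElem K).g_zero (b : NottinghamElem K).g_one hb
        (a : NottinghamElem K).g_zero hjm]
    exact ha j hj1 hjm
  inv_mem' := by
    intro a ha j hj1 hjm
    show coeff j (((a⁻¹ : NottinghamGroup K) : NottinghamElem K).g) = 0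
    have h1 : ((a⁻¹ * a : NottinghamGroup K) : NottinghamElem K) = 1 := by
      rw [inv_mul_cancel]; rfl
    have h2 : comp ((a : NottinghamElem K)).g
        (((a⁻¹ : NottinghamGroup K) : NottinghamElem K)).g = X := by
      have h3 := congrArg NottinghamElem.g h1
      rwa [Units.val_mul, NottinghamElem.mul_g, NottinghamElem.one_g] at h3
    have h4 := coeff_comp_isNn (a : NottinghamElem K).g_zero (a : NottinghamElem K).g_one ha
      ((a⁻¹ : NottinghamGroup K) : NottinghamElem K).g_zero hjm
    rw [h2, PowerSeries.coeff_X, if_neg (by omega)] at h4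
    exact h4.symm

end Aux2
section Aux3

variable {K : Type*} [CommRing K]

/-- The multiplicative inverse of `1 + X`. -/
noncomputable def oneAddXInv (K : Type*) [CommRing K] : PowerSeries K :=
  PowerSeries.invOfUnit (1 + X) 1

lemma one_add_X_mul_inv : ((1 + X : PowerSeries K)) * oneAddXInv K = 1 :=
  PowerSeries.mul_invOfUnit _ 1 (by simp)

lemma oneAddXInv_zero : constantCoeff (oneAddXInv K) = 1 := by
  have h := congrArg (constantCoeff) (one_add_X_mul_inv (K := K))
  simpa using h

lemma oneAddXInv_one : coeff 1 (oneAddXInv K) = -1 := by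
  have h := congrArg (coeff 1) (one_add_X_mul_inv (K := K))
  rw [coeff_one_mul'] at h
  simp only [map_add, map_one, constantCoeff_one, constantCoeff_X, PowerSeries.coeff_one,
    coeff_one_X, oneAddXInv_zero] at h
  norm_num at h
  linear_combination h

/-- The Riordan group element `(1 + x, x)`. -/
noncomputable def Egen (K : Type*) [CommRing K] : RiordanGroup K where
  val := ⟨1 + X, X, by simp, constantCoeff_X, coeff_one_X⟩
  inv := ⟨oneAddXInv K, X, oneAddXInv_zero, constantCoeff_X, coeff_one_X⟩
  val_inv := by
    ext1
    · show (1 + X) * comp (oneAddXInv K) X = (1 : RiordanElem K).h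
      rw [comp_X, RiordanElem.one_h, one_add_X_mul_inv]
    · show comp X X = (1 : RiordanElem K).g
      rw [comp_X, RiordanElem.one_g]
  inv_val := by
    ext1
    · show oneAddXInv K * comp (1 + X) X = (1 : RiordanElem K).h
      rw [comp_X, RiordanElem.one_h, mul_comm, one_add_X_mul_inv]
    · show comp X X = (1 : RiordanElem K).g
      rw [comp_X, RiordanElem.one_g]

@[simp] lemma Egen_val_h : ((Egen K : RiordanGroup K) : RiordanElem K).h = 1 + X := rfl
@[simp] lemma Egen_val_g : ((Egen K : RiordanGroup K) : RiordanElem K).g = X := rfl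
@[simp] lemma Egen_inv_h :
    (((Egen K)⁻¹ : RiordanGroup K) : RiordanElem K).h = oneAddXInv K := rfl
@[simp] lemma Egen_inv_g : (((Egen K)⁻¹ : RiordanGroup K) : RiordanElem K).g = X := rfl

lemma Egen_zpow (k : ℤ) :
    ((Egen K ^ k : RiordanGroup K) : RiordanElem K).g = X ∧
      coeff 1 ((Egen K ^ k : RiordanGroup K) : RiordanElem K).h = (k : K) := by
  induction k using Int.induction_on with
  | zero =>
    rw [zpow_zero, Units.val_one]
    exact ⟨RiordanElem.one_g, by rw [RiordanElem.one_h]; simp⟩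
  | succ n ih =>
    rw [zpow_add_one, Units.val_mul]
    constructor
    · rw [RiordanElem.mul_g, Egen_val_g, ih.1, comp_X]
    · rw [RiordanElem.mul_h, ih.1, Egen_val_h, comp_X, coeff_one_mul',
        ((Egen K ^ (n : ℤ) : RiordanGroup K) : RiordanElem K).h_zero, ih.2]
      simp only [map_add, map_one, constantCoeff_one, constantCoeff_X, PowerSeries.coeff_one,
        coeff_one_X]
      push_cast
      ring
  | pred n ih =>
    rw [show (-(n : ℤ) - 1) = (-(n : ℤ)) - 1 from rfl, zpow_sub_one, Units.val_mul]
    constructor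
    · rw [RiordanElem.mul_g, Egen_inv_g, ih.1, comp_X]
    · rw [RiordanElem.mul_h, ih.1, Egen_inv_h, comp_X, coeff_one_mul',
        ((Egen K ^ (-(n : ℤ)) : RiordanGroup K) : RiordanElem K).h_zero, ih.2,
        oneAddXInv_zero, oneAddXInv_one]
      push_cast
      ring

/-- The embedding of the Nottingham monoid into the Riordan monoid, `g ↦ (1, g)`. -/
noncomputable def embHom (K : Type*) [CommRing K] : NottinghamElem K →* RiordanElem K where
  toFun a := ⟨1, a.g, map_one _, a.g_zero, a.g_one⟩
  map_one' := rfl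
  map_mul' a b := by
    ext1
    · show (1 : PowerSeries K) = 1 * comp 1 a.g
      rw [one_comp, one_mul]
    · rfl

/-- The embedding of the Nottingham group into the Riordan group. -/
noncomputable def emb (K : Type*) [CommRing K] : NottinghamGroup K →* RiordanGroup K :=
  Units.map (embHom K)

@[simp] lemma emb_val_h (s : NottinghamGroup K) :
    ((emb K s : RiordanGroup K) : RiordanElem K).h = 1 := rfl
@[simp] lemma emb_val_g (s : NottinghamGroup K) :
    ((emb K s : RiordanGroup K) : RiordanElem K).g = (s : NottinghamElem K).g := rfl

end Aux3
section Aux4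

variable {K : Type*} [CommRing K]

lemma key_induction (m : ℕ) (C Rm : Subgroup (RiordanGroup K))
    (hRm : (Rm : Set (RiordanGroup K)) = Rn K m)
    (hstep : ∀ n, 1 ≤ n → n < m → ∀ a : K, ∃ e ∈ C,
      ((e : RiordanElem K).g = X ∧ IsHn n ((e : RiordanElem K)).h ∧
        coeff n ((e : RiordanElem K)).h = a)) :
    ∀ (k n : ℕ), 1 ≤ n → m - n ≤ k → ∀ w : RiordanGroup K,
      IsNn m ((w : RiordanElem K).g) → IsHn n ((w : RiordanElem K).h) →
      ∃ t ∈ C, t⁻¹ * w ∈ Rm := by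
  intro k
  induction k with
  | zero =>
    intro n hn hk w hNg hHh
    refine ⟨1, one_mem C, ?_⟩
    rw [inv_one, one_mul, ← SetLike.mem_coe, hRm]
    exact ⟨fun i hi0 him => hHh i hi0 (by omega), hNg⟩
  | succ k ih =>
    intro n hn hk w hNg hHh
    by_cases hnm : m ≤ n
    · refine ⟨1, one_mem C, ?_⟩
      rw [inv_one, one_mul, ← SetLike.mem_coe, hRm]
      exact ⟨fun i hi0 him => hHh i hi0 (by omega), hNg⟩
    · push_neg at hnm
      obtain ⟨e, heC, heg, heH, hea⟩ := hstep n hn hnm (coeff n ((w : RiordanElem K)).h)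
      have hinvg : ((e⁻¹ : RiordanGroup K) : RiordanElem K).g = X := by
        have h1 : (e⁻¹ * e : RiordanGroup K) = 1 := by group
        have h2 := congrArg (fun u : RiordanGroup K => ((u : RiordanElem K)).g) h1
        simp only [Units.val_mul, RiordanElem.mul_g, Units.val_one, RiordanElem.one_g,
          heg] at h2
        rwa [X_comp ((e⁻¹ : RiordanGroup K) : RiordanElem K).g_zero] at h2
      have hinvh_mul : ((e : RiordanElem K)).h *
          ((e⁻¹ : RiordanGroup K) : RiordanElem K).h = 1 := by
        have h1 : (e * e⁻¹ : RiordanGroup K) = 1 := by group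
        have h2 := congrArg (fun u : RiordanGroup K => ((u : RiordanElem K)).h) h1
        simpa only [Units.val_mul, RiordanElem.mul_h, Units.val_one, RiordanElem.one_h,
          heg, comp_X] using h2
      have hinvH : IsHn n ((e⁻¹ : RiordanGroup K) : RiordanElem K).h :=
        isHn_of_mul_eq_one hinvh_mul heH ((e : RiordanElem K)).h_zero
      have hinvcoeff : coeff n ((e⁻¹ : RiordanGroup K) : RiordanElem K).h
          = - coeff n ((e : RiordanElem K)).h :=
        coeff_n_of_mul_eq_one (by omega) hinvh_mul heH ((e : RiordanElem K)).h_zero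
          ((e⁻¹ : RiordanGroup K) : RiordanElem K).h_zero
      set w' := e⁻¹ * w with hw'def
      have hw'g : ((w' : RiordanGroup K) : RiordanElem K).g = ((w : RiordanElem K)).g := by
        show ((((e⁻¹ : RiordanGroup K) : RiordanElem K) * (w : RiordanElem K))).g = _
        rw [RiordanElem.mul_g, hinvg, comp_X]
      have hw'h : ((w' : RiordanGroup K) : RiordanElem K).h
          = ((e⁻¹ : RiordanGroup K) : RiordanElem K).h * ((w : RiordanElem K)).h := by
        show ((((e⁻¹ : RiordanGroup K) : RiordanElem K) * (w : RiordanElem K))).h = _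
        rw [RiordanElem.mul_h, hinvg, comp_X]
      have hH' : IsHn (n + 1) ((w' : RiordanGroup K) : RiordanElem K).h := by
        intro i hi0 hin1
        rw [hw'h]
        by_cases hin : i < n
        · exact isHn_mul hinvH hHh i hi0 hin
        · have hieq : i = n := by omega
          subst hieq
          rw [coeff_n_mul (by omega) hinvH, hinvcoeff, hea,
            ((e⁻¹ : RiordanGroup K) : RiordanElem K).h_zero, ((w : RiordanElem K)).h_zero]
          ring
      obtain ⟨t, htC, htR⟩ := ih (n + 1) (by omega) (by omega) w'
        (by rw [hw'g]; exact hNg) hH'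
      refine ⟨e * t, mul_mem heC htC, ?_⟩
      have heq : (e * t)⁻¹ * w = t⁻¹ * w' := by
        rw [hw'def, mul_inv_rev, mul_assoc]
      rw [heq]
      exact htR

end Aux4
section Aux5

variable {K : Type*} [CommRing K]

lemma master (hK : Function.Surjective (Int.cast : ℤ → K))
    (S_N : Set (NottinghamGroup K))
    (hS : ∀ (n : ℕ) (Nn : Subgroup (NottinghamGroup K)),
      (Nn : Set (NottinghamGroup K))
          = {v : NottinghamGroup K | IsNn n ((v : NottinghamElem K).g)} →
      ∀ x : NottinghamGroup K ⧸ Nn, ∃ s ∈ Subgroup.closure S_N, QuotientGroup.mk s = x)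
    (m : ℕ) (hm : 2 ≤ m) (Rm : Subgroup (RiordanGroup K))
    (hRm : (Rm : Set (RiordanGroup K)) = Rn K m)
    (x : RiordanGroup K ⧸ Rm) :
    ∃ u ∈ Subgroup.closure
      {u : RiordanGroup K |
        ((u : RiordanElem K).h = 1 + X ∧ (u : RiordanElem K).g = X) ∨
        ((u : RiordanElem K).h = 1 ∧
          ∃ s ∈ S_N, (u : RiordanElem K).g = (s : NottinghamElem K).g)},
      QuotientGroup.mk u = x := by
  set CG := Subgroup.closure
      {u : RiordanGroup K |
        ((u : RiordanElem K).h = 1 + X ∧ (u : RiordanElem K).g = X) ∨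
        ((u : RiordanElem K).h = 1 ∧
          ∃ s ∈ S_N, (u : RiordanElem K).g = (s : NottinghamElem K).g)} with hCG
  have hE : Egen K ∈ CG := Subgroup.subset_closure (Or.inl ⟨rfl, rfl⟩)
  have hembC : ∀ s, s ∈ Subgroup.closure S_N → emb K s ∈ CG := by
    intro s hs
    have h1 : emb K s ∈ Subgroup.map (emb K) (Subgroup.closure S_N) :=
      Subgroup.mem_map_of_mem _ hs
    rw [MonoidHom.map_closure] at h1
    refine Subgroup.closure_mono ?_ h1
    rintro u ⟨s', hs', rfl⟩
    exact Or.inr ⟨rfl, s', hs', rfl⟩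
  have hstep : ∀ n, 1 ≤ n → n < m → ∀ a : K, ∃ e ∈ CG,
      ((e : RiordanElem K).g = X ∧ IsHn n ((e : RiordanElem K)).h ∧
        coeff n ((e : RiordanElem K)).h = a) := by
    intro n hn1 hnm a
    by_cases hn : n = 1
    · subst hn
      obtain ⟨k, rfl⟩ := hK a
      exact ⟨Egen K ^ k, zpow_mem hE k, (Egen_zpow k).1,
        fun i hi0 hi1 => absurd hi1 (by omega), (Egen_zpow k).2⟩
    · have hn2 : 2 ≤ n := by omega
      have hτ0 : constantCoeff (X + PowerSeries.C a * X ^ n) = 0 := by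
        rw [map_add, constantCoeff_X, map_mul, constantCoeff_C, map_pow, constantCoeff_X,
          zero_pow (by omega : n ≠ 0), mul_zero, add_zero]
      have hτ1 : coeff 1 (X + PowerSeries.C a * X ^ n) = 1 := by
        rw [map_add, coeff_one_X, coeff_C_mul, coeff_X_pow, if_neg (by omega), mul_zero,
          add_zero]
      obtain ⟨s, hs, hmk⟩ := hS m (NnSubgroup K m) rfl
        (QuotientGroup.mk (toUnit ⟨X + PowerSeries.C a * X ^ n, hτ0, hτ1⟩))
      set τu := toUnit (⟨X + PowerSeries.C a * X ^ n, hτ0, hτ1⟩ : NottinghamElem K)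
        with hτudef
      have hmem : s⁻¹ * τu ∈ NnSubgroup K m := QuotientGroup.eq.mp hmk
      have hz : IsNn m (((s⁻¹ * τu : NottinghamGroup K) : NottinghamElem K)).g := hmem
      have hcomp1 : comp (((s⁻¹ * τu : NottinghamGroup K) : NottinghamElem K)).g
          ((s : NottinghamElem K)).g = X + PowerSeries.C a * X ^ n := by
        have h1 : (s * (s⁻¹ * τu) : NottinghamGroup K) = τu := by group
        have h2 := congrArg (fun v : NottinghamGroup K => ((v : NottinghamElem K)).g) h1
        simpa only [Units.val_mul, NottinghamElem.mul_g, hτudef, toUnit_val] using h2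
      have hcoeff : ∀ j ≤ m, coeff j ((s : NottinghamElem K)).g
          = coeff j (X + PowerSeries.C a * X ^ n) := by
        intro j hj
        rw [← hcomp1, coeff_comp_isNn
          ((s⁻¹ * τu : NottinghamGroup K) : NottinghamElem K).g_zero
          ((s⁻¹ * τu : NottinghamGroup K) : NottinghamElem K).g_one hz
          ((s : NottinghamElem K)).g_zero hj]
      have hsX : comp X ((s : NottinghamElem K)).g = ((s : NottinghamElem K)).g :=
        X_comp ((s : NottinghamElem K)).g_zero
      have hs_inv : comp (((s⁻¹ : NottinghamGroup K) : NottinghamElem K)).g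
          ((s : NottinghamElem K)).g = X := by
        have h1 : (s * s⁻¹ : NottinghamGroup K) = 1 := by group
        have h2 := congrArg (fun v : NottinghamGroup K => ((v : NottinghamElem K)).g) h1
        simpa only [Units.val_mul, NottinghamElem.mul_g, Units.val_one,
          NottinghamElem.one_g] using h2
      have hembinv_h : (((emb K s)⁻¹ : RiordanGroup K) : RiordanElem K).h = 1 := by
        rw [← map_inv, emb_val_h]
      have hembinv_g : (((emb K s)⁻¹ : RiordanGroup K) : RiordanElem K).g
          = ((s⁻¹ : NottinghamGroup K) : NottinghamElem K).g := by
        rw [← map_inv, emb_val_g]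
      have heC : emb K s * Egen K * (emb K s)⁻¹ * (Egen K)⁻¹ ∈ CG :=
        mul_mem (mul_mem (mul_mem (hembC s hs) hE) (inv_mem (hembC s hs))) (inv_mem hE)
      set e := emb K s * Egen K * (emb K s)⁻¹ * (Egen K)⁻¹ with hedef
      have heval : ((e : RiordanGroup K) : RiordanElem K)
          = (((emb K s : RiordanGroup K) : RiordanElem K) * ((Egen K : RiordanGroup K) : RiordanElem K)
              * (((emb K s)⁻¹ : RiordanGroup K) : RiordanElem K))
            * (((Egen K)⁻¹ : RiordanGroup K) : RiordanElem K) := by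
        rw [hedef, Units.val_mul, Units.val_mul, Units.val_mul]
      have heg : ((e : RiordanGroup K) : RiordanElem K).g = X := by
        rw [heval]
        simp only [RiordanElem.mul_g, Egen_inv_g, Egen_val_g, emb_val_g, hembinv_g,
          hsX, hs_inv, comp_X]
      have heh : ((e : RiordanGroup K) : RiordanElem K).h
          = (1 + ((s : NottinghamElem K)).g) * oneAddXInv K := by
        rw [heval]
        simp only [RiordanElem.mul_h, RiordanElem.mul_g, Egen_inv_h, Egen_val_h,
          Egen_val_g, emb_val_h, emb_val_g, hembinv_h, hembinv_g, hsX, hs_inv, comp_X,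
          one_comp, add_comp, one_mul, mul_one]
      have hfe : (1 + ((s : NottinghamElem K)).g) * oneAddXInv K
          = 1 + (((s : NottinghamElem K)).g - X) * oneAddXInv K := by
        calc (1 + ((s : NottinghamElem K)).g) * oneAddXInv K
            = (1 + X) * oneAddXInv K + (((s : NottinghamElem K)).g - X) * oneAddXInv K := by
              ring
          _ = 1 + (((s : NottinghamElem K)).g - X) * oneAddXInv K := by
              rw [one_add_X_mul_inv]
      have hcoefft : ∀ p ≤ m, coeff p (((s : NottinghamElem K)).g - X)
          = if p = n then a else 0 := by
        intro p hp
        rw [map_sub, hcoeff p hp, map_add, coeff_C_mul, coeff_X_pow]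
        by_cases hpn : p = n
        · rw [if_pos hpn, if_pos hpn, mul_one]; ring
        · rw [if_neg hpn, if_neg hpn, mul_zero]; ring
      refine ⟨e, heC, heg, ?_, ?_⟩
      · intro i hi0 hin
        rw [heh, hfe, map_add, PowerSeries.coeff_one, if_neg (by omega), coeff_mul_range,
          zero_add]
        apply Finset.sum_eq_zero
        intro p hp
        rw [hcoefft p (by have := Finset.mem_range.1 hp; omega),
          if_neg (by have := Finset.mem_range.1 hp; omega), zero_mul]
      · rw [heh, hfe, map_add, PowerSeries.coeff_one, if_neg (by omega), coeff_mul_range,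
          zero_add, Finset.sum_eq_single_of_mem n (Finset.mem_range.2 (by omega))]
        · rw [hcoefft n (by omega), if_pos rfl, Nat.sub_self,
            coeff_zero_eq_constantCoeff_apply, oneAddXInv_zero, mul_one]
        · intro p hp hpn
          rw [hcoefft p (by have := Finset.mem_range.1 hp; omega), if_neg hpn, zero_mul]
  obtain ⟨u, rfl⟩ := QuotientGroup.mk_surjective x
  have huv : comp (((u⁻¹ : RiordanGroup K) : RiordanElem K)).g ((u : RiordanElem K)).g
      = X := by
    have h1 : (u * u⁻¹ : RiordanGroup K) = 1 := by group
    have h2 := congrArg (fun v : RiordanGroup K => ((v : RiordanElem K)).g) h1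
    simpa only [Units.val_mul, RiordanElem.mul_g, Units.val_one, RiordanElem.one_g] using h2
  have hvu : comp ((u : RiordanElem K)).g (((u⁻¹ : RiordanGroup K) : RiordanElem K)).g
      = X := by
    have h1 : (u⁻¹ * u : RiordanGroup K) = 1 := by group
    have h2 := congrArg (fun v : RiordanGroup K => ((v : RiordanElem K)).g) h1
    simpa only [Units.val_mul, RiordanElem.mul_g, Units.val_one, RiordanElem.one_g] using h2
  set vU : NottinghamGroup K :=
    { val := ⟨((u : RiordanElem K)).g, (u : RiordanElem K).g_zero,
        (u : RiordanElem K).g_one⟩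
      inv := ⟨(((u⁻¹ : RiordanGroup K) : RiordanElem K)).g,
        ((u⁻¹ : RiordanGroup K) : RiordanElem K).g_zero,
        ((u⁻¹ : RiordanGroup K) : RiordanElem K).g_one⟩
      val_inv := by ext1; simpa using huv
      inv_val := by ext1; simpa using hvu } with hvUdef
  obtain ⟨s, hs, hmk⟩ := hS m (NnSubgroup K m) rfl (QuotientGroup.mk vU)
  have hmem : s⁻¹ * vU ∈ NnSubgroup K m := QuotientGroup.eq.mp hmk
  have hz : IsNn m (((s⁻¹ * vU : NottinghamGroup K) : NottinghamElem K)).g := hmem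
  set w : RiordanGroup K := (emb K s)⁻¹ * u with hwdef
  have hwg : ((w : RiordanGroup K) : RiordanElem K).g
      = (((s⁻¹ * vU : NottinghamGroup K) : NottinghamElem K)).g := by
    rw [hwdef, Units.val_mul, RiordanElem.mul_g, Units.val_mul, NottinghamElem.mul_g,
      ← map_inv, emb_val_g]
  have hNw : IsNn m ((w : RiordanElem K).g) := by rw [hwg]; exact hz
  have hHw : IsHn 1 ((w : RiordanElem K).h) := fun i hi0 hi1 => absurd hi1 (by omega)
  obtain ⟨t, htC, htR⟩ := key_induction m CG Rm hRm hstep m 1 le_rfl (by omega) w hNw hHw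
  refine ⟨emb K s * t, mul_mem (hembC s hs) htC, ?_⟩
  rw [QuotientGroup.eq]
  have heq : (emb K s * t)⁻¹ * u = t⁻¹ * w := by rw [hwdef, mul_inv_rev, mul_assoc]
  rw [heq]
  exact htR

end Aux5

/-- for `K = F_p` or `K = ℤ`, if `S_N` topologically generates the Nottingham
group `N(K)` (its image generates every quotient `N(K)/N^n(K)`), then the images of
`(1+x, x)` together with `(1, g)`, `g ∈ S_N`, generate every quotient `R(K)/R^m(K)`;
that is, `{(1+x,x)} ∪ {(1,g) : g ∈ S_N}` topologically generates the Riordan group. -/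
theorem riordan_topologically_generated (p : ℕ) (hp : p.Prime) :
    (∀ S_N : Set (NottinghamGroup (ZMod p)),
      (∀ (n : ℕ) (Nn : Subgroup (NottinghamGroup (ZMod p))),
        (Nn : Set (NottinghamGroup (ZMod p)))
            = {v : NottinghamGroup (ZMod p) | IsNn n ((v : NottinghamElem (ZMod p)).g)} →
        ∀ x : NottinghamGroup (ZMod p) ⧸ Nn,
          ∃ s ∈ Subgroup.closure S_N, QuotientGroup.mk s = x) →
      ∀ (m : ℕ), 2 ≤ m → ∀ (Rm : Subgroup (RiordanGroup (ZMod p))),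
        (Rm : Set (RiordanGroup (ZMod p))) = Rn (ZMod p) m →
        ∀ x : RiordanGroup (ZMod p) ⧸ Rm,
          ∃ u ∈ Subgroup.closure
            {u : RiordanGroup (ZMod p) |
              ((u : RiordanElem (ZMod p)).h = 1 + X ∧
                (u : RiordanElem (ZMod p)).g = X) ∨
              ((u : RiordanElem (ZMod p)).h = 1 ∧
                ∃ s ∈ S_N, (u : RiordanElem (ZMod p)).g
                  = (s : NottinghamElem (ZMod p)).g)},
            QuotientGroup.mk u = x) ∧
    (∀ S_N : Set (NottinghamGroup ℤ),
      (∀ (n : ℕ) (Nn : Subgroup (NottinghamGroup ℤ)),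
        (Nn : Set (NottinghamGroup ℤ)) = {v : NottinghamGroup ℤ | IsNn n ((v : NottinghamElem ℤ).g)} →
        ∀ x : NottinghamGroup ℤ ⧸ Nn,
          ∃ s ∈ Subgroup.closure S_N, QuotientGroup.mk s = x) →
      ∀ (m : ℕ), 2 ≤ m → ∀ (Rm : Subgroup (RiordanGroup ℤ)),
        (Rm : Set (RiordanGroup ℤ)) = Rn ℤ m →
        ∀ x : RiordanGroup ℤ ⧸ Rm,
          ∃ u ∈ Subgroup.closure
            {u : RiordanGroup ℤ |
              ((u : RiordanElem ℤ).h = 1 + X ∧ (u : RiordanElem ℤ).g = X) ∨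
              ((u : RiordanElem ℤ).h = 1 ∧
                ∃ s ∈ S_N, (u : RiordanElem ℤ).g = (s : NottinghamElem ℤ).g)},
            QuotientGroup.mk u = x) := by
  constructor
  · intro S_N hS m hm Rm hRm x
    exact master ZMod.intCast_surjective S_N hS m hm Rm hRm x
  · intro S_N hS m hm Rm hRm x
    exact master (fun n => ⟨n, Int.cast_id⟩) S_N hS m hm Rm hRm x

end RiordanPaper
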